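/- The accumulated error bound via union over subsets: if each |e_i| ≤ B for i = 1,…,m (as integers) and S ⊆ {1,…,m}, then |∑_{i∈S} e_i| ≤ mB; hence if mB < ⌊q/4⌋, the LWE decryption of every well-formed ciphertext (for any choice of x ∈ {0,1}^m and r ∈ {0,1}) is correct. -/
import Mathlib

def Q (q : ℕ) (x : ZMod q) : ℕ :=
  if q / 4 < x.val ∧ x.val ≤ 3 * q / 4 then 1 else 0

lemma zmod_val_intCast_lt (q : ℕ) [NeZero q] (z : ℤ) (h0 : 0 ≤ z) (h1 : z < q) :
    ((z : ZMod q)).val = z.toNat := by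
  have h : ((z : ZMod q)) = ((z.toNat : ℕ) : ZMod q) := by
    rw [← Int.cast_natCast, Int.toNat_of_nonneg h0]
  rw [h, ZMod.val_cast_of_lt (by omega)]

theorem bounded_errors_imply_correct_decryption
    (q n m : ℕ) (hq : ∃ k : ℕ, q = 2 ^ k) (hq8 : 8 ≤ q)
    (s : Fin n → ZMod q) (A : Fin m → Fin n → ZMod q)
    (e : Fin m → ℤ) (B : ℤ) (hB : ∀ i, |e i| ≤ B) :
    (∀ S : Finset (Fin m), |∑ i ∈ S, e i| ≤ (m : ℤ) * B)
    ∧ ((m : ℤ) * B < ((q / 4 : ℕ) : ℤ) →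
        ∀ (x : Fin m → Bool) (r : ℕ), r ≤ 1 →
          Q q (((∑ i ∈ Finset.univ.filter (fun i => x i = true),
                  ((∑ j, A i j * s j) + (e i : ZMod q)))
                + (r : ZMod q) * ((q / 2 : ℕ) : ZMod q))
              - ∑ j, (∑ i ∈ Finset.univ.filter (fun i => x i = true), A i j) * s j) = r) := by
  obtain ⟨k, hk⟩ := hq
  have hk3 : 3 ≤ k := by
    by_contra h
    push_neg at h
    interval_cases k <;> omega
  have hqt : q = 8 * 2 ^ (k - 3) := by
    have h : 2 ^ k = 2 ^ (k - 3 + 3) := by congr 1; omega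
    rw [hk, h, pow_add]; ring
  set t := 2 ^ (k - 3) with ht
  haveI : NeZero q := ⟨by omega⟩
  have habs : ∀ S : Finset (Fin m), |∑ i ∈ S, e i| ≤ (m : ℤ) * B := by
    intro S
    have h1 : |∑ i ∈ S, e i| ≤ ∑ i ∈ S, B :=
      (Finset.abs_sum_le_sum_abs _ _).trans (Finset.sum_le_sum fun i _ => hB i)
    rw [Finset.sum_const, nsmul_eq_mul] at h1
    refine h1.trans ?_
    rcases Nat.eq_zero_or_pos m with hm | hm
    · subst hm
      simp [Finset.eq_empty_of_isEmpty S]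
    · have hb : 0 ≤ B := (abs_nonneg _).trans (hB ⟨0, hm⟩)
      have hc : (S.card : ℤ) ≤ (m : ℤ) := by
        exact_mod_cast (Finset.card_le_univ S).trans_eq (by simp)
      exact mul_le_mul_of_nonneg_right hc hb
  refine ⟨habs, fun hmB x r hr => ?_⟩
  set S := Finset.univ.filter (fun i => x i = true) with hS
  set E : ℤ := ∑ i ∈ S, e i with hE
  have hq4 : q / 4 = 2 * t := by omega
  have hq2 : q / 2 = 4 * t := by omega
  have hq34 : 3 * q / 4 = 6 * t := by omega
  have hEbound : |E| < ((q / 4 : ℕ) : ℤ) := lt_of_le_of_lt (habs S) hmB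
  rw [abs_lt, hq4] at hEbound
  push_cast at hEbound
  obtain ⟨hE1, hE2⟩ := hEbound
  rw [show ((q / 2 : ℕ) : ZMod q) = ((4 * t : ℕ) : ZMod q) by rw [hq2]]
  have key : ((∑ i ∈ S, ((∑ j, A i j * s j) + (e i : ZMod q)))
                + (r : ZMod q) * ((4 * t : ℕ) : ZMod q))
              - ∑ j, (∑ i ∈ S, A i j) * s j
      = ((E + r * (4 * t : ℕ) : ℤ) : ZMod q) := by
    have h1 : ∑ j, (∑ i ∈ S, A i j) * s j = ∑ i ∈ S, ∑ j, A i j * s j := by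
      simp only [Finset.sum_mul]
      rw [Finset.sum_comm]
    rw [Finset.sum_add_distrib, h1, hE]
    push_cast
    ring
  rw [key]
  have htpos : 1 ≤ t := Nat.one_le_two_pow
  interval_cases r
  · -- r = 0
    simp only [Nat.cast_zero, zero_mul, add_zero]
    rw [Q]
    rcases le_or_gt 0 E with h0 | h0
    · rw [zmod_val_intCast_lt q E h0 (by omega), if_neg]
      rw [hq4]
      omega
    · have heq : ((E : ZMod q)) = (((E + q : ℤ) : ZMod q)) := by
        push_cast
        simp [ZMod.natCast_self]
      rw [heq, zmod_val_intCast_lt q (E + q) (by omega) (by omega),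
        if_neg]
      omega
  · -- r = 1
    rw [Q, zmod_val_intCast_lt q _ (by omega) (by omega), if_pos]
    constructor <;> omega
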